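/- Fix integers y₁, y₂ ≥ 1 and N > y₁ + y₂, and start the random walk at Z(0) = (y₁, y₂). Let v_N be an admissible solution of the Dirichlet problem on T_N with boundary data φ_N(x₁,x₂) = N − √(2/3)·x₂, and define ṽ_N(a,b) = v_N(T·(a,b)) for (a,b) ∈ ℤ² with a ≥ 0, b ≥ 0, a + b ≤ N and (a,b) not equal to (N,0) or (0,N); set f_N(z) = (1/6)·Σ_{e ∈ E} ṽ_N(z + e) − ṽ_N(z) for z ∈ D_N. Then σ_N is almost surely finite, the series Σ_{z ∈ D_N} G_N((y₁,y₂), z)·|f_N(z)| converges, and E[ṽ_N(Z(σ_N))] = ṽ_N(y₁,y₂) + Σ_{z ∈ D_N} G_N((y₁,y₂), z)·f_N(z). (The exit position Z(σ_N) almost surely avoids the points (N,0), (0,N) and (0,0), so ṽ_N(Z(σ_N)) is well defined.) -/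

import Mathlib

open MeasureTheory ProbabilityTheory Filter Real Set

/-- The step set of the three-gambler random walk. -/
def stepSet : Finset (ℤ × ℤ) := {(1, 0), (-1, 0), (0, 1), (0, -1), (1, -1), (-1, 1)}

/-- The random walk `Z(n)` started at `y`, driven by the steps `Y`. -/
def walk {Ω : Type*} (y : ℤ × ℤ) (Y : ℕ → Ω → ℤ × ℤ) (n : ℕ) (ω : Ω) : ℤ × ℤ :=
  y + ∑ i ∈ Finset.range n, Y i ω

/-- The domain `D_N = {(a,b) : a ≥ 1, b ≥ 1, a + b ≤ N - 1}`. -/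
def inDomain (N : ℕ) (z : ℤ × ℤ) : Prop :=
  1 ≤ z.1 ∧ 1 ≤ z.2 ∧ z.1 + z.2 ≤ (N : ℤ) - 1

/-- The exit time `σ_N = inf {n ≥ 1 : Z(n) ∉ D_N}`. -/
noncomputable def exitTime {Ω : Type*} (N : ℕ) (y : ℤ × ℤ) (Y : ℕ → Ω → ℤ × ℤ)
    (ω : Ω) : ℕ :=
  sInf {n : ℕ | 1 ≤ n ∧ ¬ inDomain N (walk y Y n ω)}

/-- The closed equilateral triangle `T_N` with vertices
`(0,0)`, `(√2·N, 0)`, `(N/√2, √(3/2)·N)`. -/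
def Tri (N : ℝ) : Set (ℝ × ℝ) :=
  convexHull ℝ {((0 : ℝ), (0 : ℝ)), (Real.sqrt 2 * N, 0),
    (N / Real.sqrt 2, Real.sqrt (3 / 2) * N)}

noncomputable def vertB (N : ℝ) : ℝ × ℝ := (Real.sqrt 2 * N, 0)

noncomputable def vertC (N : ℝ) : ℝ × ℝ := (N / Real.sqrt 2, Real.sqrt (3 / 2) * N)

/-- The Laplacian `∂²v/∂x₁² + ∂²v/∂x₂²` of a function on the plane. -/
noncomputable def lap (v : ℝ × ℝ → ℝ) (x : ℝ × ℝ) : ℝ :=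
  fderiv ℝ (fun y => fderiv ℝ v y (1, 0)) x (1, 0) +
    fderiv ℝ (fun y => fderiv ℝ v y (0, 1)) x (0, 1)

/-- `v` is an admissible solution of the Dirichlet problem on `T_N` with boundary data `φ`
on the edge `T_N^{(3)}` joining `vertB N` and `vertC N`. -/
def IsAdmissible (N : ℝ) (φ : ℝ × ℝ → ℝ) (v : ℝ × ℝ → ℝ) : Prop :=
  (∃ M : ℝ, ∀ x ∈ Tri N, |v x| ≤ M) ∧
  (∀ x ∈ Tri N, x ≠ vertB N → x ≠ vertC N → ContinuousWithinAt v (Tri N) x) ∧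
  ContDiffOn ℝ 2 v (interior (Tri N)) ∧
  (∀ x ∈ interior (Tri N), lap v x = 0) ∧
  (∀ x ∈ segment ℝ ((0 : ℝ), (0 : ℝ)) (vertB N), x ≠ vertB N → v x = 0) ∧
  (∀ x ∈ segment ℝ ((0 : ℝ), (0 : ℝ)) (vertC N), x ≠ vertC N → v x = 0) ∧
  (∀ x ∈ openSegment ℝ (vertB N) (vertC N), v x = φ x)

/-- The linear map `T` with rows `(√2, √2/2)` and `(0, √6/2)` applied to `(a, b)`. -/
noncomputable def Tmap (a b : ℝ) : ℝ × ℝ :=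
  (Real.sqrt 2 * a + Real.sqrt 2 / 2 * b, Real.sqrt 6 / 2 * b)

/-- The Green function `G_N(y, z)` of the walk killed at the exit time, as a real number. -/
noncomputable def green {Ω : Type*} [MeasurableSpace Ω] (μ : Measure Ω) (N : ℕ)
    (y : ℤ × ℤ) (Y : ℕ → Ω → ℤ × ℤ) (z : ℤ × ℤ) : ℝ :=
  (∑' n : ℕ, μ {ω | walk y Y n ω = z ∧ n < exitTime N y Y ω}).toReal

/-- The function `v_N` read on the lattice: `ṽ_N(a,b) = v_N(T·(a,b))`. -/
noncomputable def vLattice (v : (ℝ × ℝ) → ℝ) (z : ℤ × ℤ) : ℝ :=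
  v (Tmap (z.1 : ℝ) (z.2 : ℝ))

/-- The one-step discrete error `f_N(z) = (1/6)·Σ_{e ∈ E} ṽ_N(z+e) − ṽ_N(z)`. -/
noncomputable def fErr (v : (ℝ × ℝ) → ℝ) (z : ℤ × ℤ) : ℝ :=
  (1 / 6 : ℝ) * (∑ e ∈ stepSet, vLattice v (z + e)) - vLattice v z

namespace Aux

instance (N : ℕ) (z : ℤ × ℤ) : Decidable (inDomain N z) := by
  unfold inDomain; infer_instance

set_option linter.unusedSectionVars false

variable {Ω : Type*} [MeasurableSpace Ω]

lemma walk_zero (y : ℤ × ℤ) (Y : ℕ → Ω → ℤ × ℤ) (ω : Ω) : walk y Y 0 ω = y := by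
  simp [walk]

lemma walk_succ (y : ℤ × ℤ) (Y : ℕ → Ω → ℤ × ℤ) (n : ℕ) (ω : Ω) :
    walk y Y (n + 1) ω = walk y Y n ω + Y n ω := by
  simp [walk, Finset.sum_range_succ, add_assoc]

lemma measurable_walk (y : ℤ × ℤ) (Y : ℕ → Ω → ℤ × ℤ) (hY : ∀ n, Measurable (Y n)) (n : ℕ) :
    Measurable (walk y Y n) := by
  unfold walk
  exact measurable_const.add (Finset.measurable_sum _ fun i _ => hY i)

/-- The walk stays in the domain through time `n`. -/
def stays (N : ℕ) (y : ℤ × ℤ) (Y : ℕ → Ω → ℤ × ℤ) (n : ℕ) (ω : Ω) : Prop :=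
  ∀ m, 1 ≤ m → m ≤ n → inDomain N (walk y Y m ω)

/-- The event that the walk eventually leaves the domain. -/
def goodSet (N : ℕ) (y : ℤ × ℤ) (Y : ℕ → Ω → ℤ × ℤ) : Set Ω :=
  {ω | ∃ n : ℕ, 1 ≤ n ∧ ¬ inDomain N (walk y Y n ω)}

lemma exitTime_pos_iff {N : ℕ} {y : ℤ × ℤ} {Y : ℕ → Ω → ℤ × ℤ} {ω : Ω} :
    1 ≤ exitTime N y Y ω ↔ ω ∈ goodSet N y Y := by
  constructor
  · intro h
    by_contra hc
    have : {n : ℕ | 1 ≤ n ∧ ¬ inDomain N (walk y Y n ω)} = ∅ := by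
      ext n; simp only [mem_setOf_eq, mem_empty_iff_false, iff_false]
      intro hn; exact hc ⟨n, hn⟩
    rw [exitTime, this, Nat.sInf_empty] at h; omega
  · rintro ⟨n, hn⟩
    have := Nat.sInf_mem (⟨n, hn⟩ : {n : ℕ | 1 ≤ n ∧ ¬ inDomain N (walk y Y n ω)}.Nonempty)
    exact this.1

lemma lt_exitTime_iff {N : ℕ} {y : ℤ × ℤ} {Y : ℕ → Ω → ℤ × ℤ} {ω : Ω} {n : ℕ} :
    n < exitTime N y Y ω ↔ ω ∈ goodSet N y Y ∧ stays N y Y n ω := by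
  constructor
  · intro h
    have hgood : ω ∈ goodSet N y Y := exitTime_pos_iff.mp (by omega)
    refine ⟨hgood, fun m h1 h2 => ?_⟩
    by_contra hc
    have : exitTime N y Y ω ≤ m := Nat.sInf_le ⟨h1, hc⟩
    omega
  · rintro ⟨⟨k, hk⟩, hst⟩
    have hmem : 1 ≤ exitTime N y Y ω ∧ ¬ inDomain N (walk y Y (exitTime N y Y ω) ω) :=
      Nat.sInf_mem (⟨k, hk⟩ :
        {n : ℕ | 1 ≤ n ∧ ¬ inDomain N (walk y Y n ω)}.Nonempty)
    by_contra hc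
    exact hmem.2 (hst _ hmem.1 (by omega))

lemma exit_not_inDomain {N : ℕ} {y : ℤ × ℤ} {Y : ℕ → Ω → ℤ × ℤ} {ω : Ω}
    (h : ω ∈ goodSet N y Y) :
    1 ≤ exitTime N y Y ω ∧ ¬ inDomain N (walk y Y (exitTime N y Y ω) ω) := by
  obtain ⟨k, hk⟩ := h
  exact Nat.sInf_mem (⟨k, hk⟩ : {n : ℕ | 1 ≤ n ∧ ¬ inDomain N (walk y Y n ω)}.Nonempty)

lemma measurableSet_walk_eq (y : ℤ × ℤ) {Y : ℕ → Ω → ℤ × ℤ} (hY : ∀ n, Measurable (Y n))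
    (n : ℕ) (z : ℤ × ℤ) : MeasurableSet {ω | walk y Y n ω = z} :=
  measurable_walk y Y hY n (measurableSet_singleton z)

lemma measurableSet_inDomain (N : ℕ) (y : ℤ × ℤ) {Y : ℕ → Ω → ℤ × ℤ}
    (hY : ∀ n, Measurable (Y n)) (n : ℕ) :
    MeasurableSet {ω | inDomain N (walk y Y n ω)} :=
  measurable_walk y Y hY n ((setOf (inDomain N)).to_countable.measurableSet)

lemma measurableSet_stays (N : ℕ) (y : ℤ × ℤ) {Y : ℕ → Ω → ℤ × ℤ}
    (hY : ∀ n, Measurable (Y n)) (n : ℕ) :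
    MeasurableSet {ω | stays N y Y n ω} := by
  have : {ω | stays N y Y n ω} =
      ⋂ m ∈ Finset.Icc 1 n, {ω | inDomain N (walk y Y m ω)} := by
    ext ω
    simp only [mem_setOf_eq, mem_iInter, Finset.mem_Icc]
    exact ⟨fun h m hm => h m hm.1 hm.2, fun h m h1 h2 => h m ⟨h1, h2⟩⟩
  rw [this]
  exact MeasurableSet.biInter (Finset.Icc 1 n).countable_toSet
    fun m _ => measurableSet_inDomain N y hY m

lemma measurableSet_goodSet (N : ℕ) (y : ℤ × ℤ) {Y : ℕ → Ω → ℤ × ℤ}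
    (hY : ∀ n, Measurable (Y n)) : MeasurableSet (goodSet N y Y) := by
  have : goodSet N y Y = ⋃ n : ℕ, ⋃ _ : 1 ≤ n, {ω | inDomain N (walk y Y n ω)}ᶜ := by
    ext ω; simp [goodSet]
  rw [this]
  exact MeasurableSet.iUnion fun n => MeasurableSet.iUnion fun _ =>
    (measurableSet_inDomain N y hY n).compl

lemma measurable_exitTime (N : ℕ) (y : ℤ × ℤ) {Y : ℕ → Ω → ℤ × ℤ}
    (hY : ∀ n, Measurable (Y n)) : Measurable (exitTime N y Y) := by
  apply measurable_to_countable'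
  intro m
  have : exitTime N y Y ⁻¹' {m} =
      ({ω | 1 ≤ m ∧ ¬ inDomain N (walk y Y m ω)} ∩ {ω | stays N y Y (m - 1) ω}) ∪
      ({ω | m = 0} ∩ (goodSet N y Y)ᶜ) := by
    ext ω
    simp only [mem_preimage, mem_singleton_iff, mem_union, mem_inter_iff, mem_setOf_eq,
      mem_compl_iff]
    constructor
    · intro h
      by_cases hg : ω ∈ goodSet N y Y
      · left
        have h1 : 1 ≤ exitTime N y Y ω := exitTime_pos_iff.mpr hg
        have h2 := (exit_not_inDomain hg).2
        have h3 : (m - 1 : ℕ) < exitTime N y Y ω := by omega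
        have := (lt_exitTime_iff.mp h3).2
        exact ⟨by rw [← h]; exact ⟨h1, h2⟩, this⟩
      · right
        refine ⟨?_, hg⟩
        have : {n : ℕ | 1 ≤ n ∧ ¬ inDomain N (walk y Y n ω)} = ∅ := by
          ext n; simp only [mem_setOf_eq, mem_empty_iff_false, iff_false]
          intro hn; exact hg ⟨n, hn⟩
        rw [← h, exitTime, this, Nat.sInf_empty]
    · rintro (⟨⟨h1, h2⟩, hst⟩ | ⟨h0, hg⟩)
      · have hle : exitTime N y Y ω ≤ m := Nat.sInf_le ⟨h1, h2⟩
        have hgood : ω ∈ goodSet N y Y := ⟨m, h1, h2⟩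
        by_contra hne
        have hlt : exitTime N y Y ω ≤ m - 1 := by omega
        have h4 := (exit_not_inDomain hgood).1
        exact (exit_not_inDomain hgood).2 (hst _ h4 hlt)
      · have : {n : ℕ | 1 ≤ n ∧ ¬ inDomain N (walk y Y n ω)} = ∅ := by
          ext n; simp only [mem_setOf_eq, mem_empty_iff_false, iff_false]
          intro hn; exact hg ⟨n, hn⟩
        rw [exitTime, this, Nat.sInf_empty, h0]
  rw [this]
  refine MeasurableSet.union ?_ ?_
  · refine MeasurableSet.inter ?_ (measurableSet_stays N y hY _)
    by_cases hm : 1 ≤ m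
    · simp only [hm, true_and]
      exact (measurableSet_inDomain N y hY m).compl
    · have : {ω : Ω | 1 ≤ m ∧ ¬ inDomain N (walk y Y m ω)} = ∅ := by
        ext ω; simp [hm]
      rw [this]; exact MeasurableSet.empty
  · refine MeasurableSet.inter ?_ (measurableSet_goodSet N y hY).compl
    by_cases hm : m = 0 <;> simp [hm]

end Aux
namespace Aux

set_option linter.unusedSectionVars false

variable {Ω : Type*} [MeasurableSpace Ω] {μ : MeasureTheory.Measure Ω}
  [MeasureTheory.IsProbabilityMeasure μ] {Y : ℕ → Ω → ℤ × ℤ}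

/-- If `A` is determined by the steps in `s` and `B` by the steps in `t`, with `s, t`
disjoint, then `A` and `B` are independent. -/
lemma meas_inter_eq_mul (hY : ∀ n, Measurable (Y n))
    (hindep : iIndepFun Y μ)
    (s t : Finset ℕ) (hst : Disjoint s t) (A B : Set Ω)
    (hA : ∀ ω ω', (∀ i ∈ s, Y i ω = Y i ω') → (ω ∈ A ↔ ω' ∈ A))
    (hB : ∀ ω ω', (∀ i ∈ t, Y i ω = Y i ω') → (ω ∈ B ↔ ω' ∈ B)) :
    μ (A ∩ B) = μ A * μ B := by
  set Ts : Ω → (∀ _ : s, ℤ × ℤ) := fun ω i => Y i ω with hTs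
  set Tt : Ω → (∀ _ : t, ℤ × ℤ) := fun ω i => Y i ω with hTt
  have hA' : Ts ⁻¹' (Ts '' A) = A := by
    ext ω
    constructor
    · rintro ⟨ω', hω', h2⟩
      exact (hA ω' ω (fun i hi => congrFun h2 ⟨i, hi⟩)).mp hω'
    · exact fun h => ⟨ω, h, rfl⟩
  have hB' : Tt ⁻¹' (Tt '' B) = B := by
    ext ω
    constructor
    · rintro ⟨ω', hω', h2⟩
      exact (hB ω' ω (fun i hi => congrFun h2 ⟨i, hi⟩)).mp hω'
    · exact fun h => ⟨ω, h, rfl⟩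
  have h := (hindep.indepFun_finset s t hst hY).measure_inter_preimage_eq_mul
    (Ts '' A) (Tt '' B) ((Ts '' A).to_countable.measurableSet)
    ((Tt '' B).to_countable.measurableSet)
  rw [hA', hB'] at h
  exact h

/-- The event that all the steps in block `j` (of length `N`) equal `(1,0)`. -/
def blockEv (Y : ℕ → Ω → ℤ × ℤ) (N j : ℕ) : Set Ω :=
  {ω | ∀ i, j * N ≤ i → i < (j + 1) * N → Y i ω = (1, 0)}

lemma blockEv_eq (N j : ℕ) : blockEv Y N j =
    ⋂ i ∈ Finset.Ico (j * N) ((j + 1) * N), Y i ⁻¹' {((1 : ℤ), (0 : ℤ))} := by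
  ext ω
  simp only [blockEv, mem_setOf_eq, mem_iInter, Finset.mem_Ico, mem_preimage,
    mem_singleton_iff]
  exact ⟨fun h i hi => h i hi.1 hi.2, fun h i h1 h2 => h i ⟨h1, h2⟩⟩

lemma measurableSet_blockEv (hY : ∀ n, Measurable (Y n)) (N j : ℕ) :
    MeasurableSet (blockEv Y N j) := by
  rw [blockEv_eq]
  exact MeasurableSet.biInter (Finset.Ico _ _).countable_toSet
    fun i _ => hY i (measurableSet_singleton _)

lemma meas_blockEv (hindep : iIndepFun Y μ)
    (hdist : ∀ n, ∀ e : ℤ × ℤ,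
      μ {ω | Y n ω = e} = if e ∈ stepSet then (6 : ENNReal)⁻¹ else 0)
    (N j : ℕ) : μ (blockEv Y N j) = ((6 : ENNReal)⁻¹) ^ N := by
  rw [blockEv_eq]
  have h := hindep.meas_biInter (S := Finset.Ico (j * N) ((j + 1) * N))
    (s := fun i => Y i ⁻¹' {((1 : ℤ), (0 : ℤ))})
    (fun i _ => ⟨{((1 : ℤ), (0 : ℤ))}, measurableSet_singleton _, rfl⟩)
  rw [h]
  have hone : ∀ i : ℕ, μ (Y i ⁻¹' {((1 : ℤ), (0 : ℤ))}) = (6 : ENNReal)⁻¹ := by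
    intro i
    have := hdist i (1, 0)
    have hmem : ((1 : ℤ), (0 : ℤ)) ∈ stepSet := by decide
    rw [if_pos hmem] at this
    simpa [Set.preimage, Set.mem_singleton_iff] using this
  rw [Finset.prod_congr rfl (fun i _ => hone i), Finset.prod_const, Nat.card_Ico]
  congr 1
  rw [add_mul, one_mul, Nat.add_sub_cancel_left]

end Aux
namespace Aux

set_option linter.unusedSectionVars false

variable {Ω : Type*} [MeasurableSpace Ω] {μ : MeasureTheory.Measure Ω}
  [MeasureTheory.IsProbabilityMeasure μ] {Y : ℕ → Ω → ℤ × ℤ}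

lemma escape {N : ℕ} (hN1 : 1 ≤ N) {y : ℤ × ℤ} (hy : inDomain N y) {Y : ℕ → Ω → ℤ × ℤ}
    {j k : ℕ} (hjk : (j + 1) * N ≤ k) {ω : Ω} (hst : stays N y Y k ω)
    (hA : ω ∈ blockEv Y N j) : False := by
  have hsum : walk y Y ((j + 1) * N) ω = walk y Y (j * N) ω + ((N : ℤ), (0 : ℤ)) := by
    unfold walk
    rw [add_assoc]
    congr 1
    rw [Finset.range_eq_Ico,
      ← Finset.sum_Ico_consecutive _ (Nat.zero_le (j * N))
        (Nat.mul_le_mul_right N (by omega : j ≤ j + 1)), ← Finset.range_eq_Ico]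
    congr 1
    calc ∑ i ∈ Finset.Ico (j * N) ((j + 1) * N), Y i ω
        = ∑ _i ∈ Finset.Ico (j * N) ((j + 1) * N), ((1 : ℤ), (0 : ℤ)) :=
          Finset.sum_congr rfl (fun i hi => by
            rw [Finset.mem_Ico] at hi
            exact hA i hi.1 hi.2)
      _ = ((N : ℤ), (0 : ℤ)) := by
          rw [Finset.sum_const, Nat.card_Ico]
          have h : (j + 1) * N - j * N = N := by
            rw [add_mul, one_mul, Nat.add_sub_cancel_left]
          rw [h]
          ext <;> simp
  have h1 : inDomain N (walk y Y (j * N) ω) := by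
    rcases Nat.eq_zero_or_pos (j * N) with h0 | hpos
    · rw [h0, walk_zero]; exact hy
    · exact hst _ hpos (le_trans (Nat.mul_le_mul_right N (by omega)) hjk)
  have h2 : inDomain N (walk y Y ((j + 1) * N) ω) := by
    refine hst _ ?_ hjk
    have := Nat.mul_le_mul (by omega : 1 ≤ j + 1) hN1
    omega
  obtain ⟨hx1, hy1, hs1⟩ := h1
  obtain ⟨hx2, hy2, hs2⟩ := h2
  rw [hsum, Prod.fst_add, Prod.snd_add] at hs2
  simp only at hs2
  omega

lemma meas_iInter_blockCompl (hY : ∀ n, Measurable (Y n))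
    (hindep : iIndepFun Y μ)
    (hdist : ∀ n, ∀ e : ℤ × ℤ,
      μ {ω | Y n ω = e} = if e ∈ stepSet then (6 : ENNReal)⁻¹ else 0)
    (N : ℕ) : ∀ m : ℕ,
    μ (⋂ j ∈ Finset.range m, (blockEv Y N j)ᶜ) ≤ (1 - (6 : ENNReal)⁻¹ ^ N) ^ m := by
  intro m
  induction m with
  | zero => simp
  | succ m ih =>
    have hins : (⋂ j ∈ Finset.range (m + 1), (blockEv Y N j)ᶜ) =
        ((blockEv Y N m)ᶜ ∩ ⋂ j ∈ Finset.range m, (blockEv Y N j)ᶜ) := by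
      rw [Finset.range_add_one, Finset.set_biInter_insert]
    rw [hins]
    have hAdet : ∀ ω ω' : Ω, (∀ i ∈ Finset.Ico (m * N) ((m + 1) * N), Y i ω = Y i ω') →
        (ω ∈ (blockEv Y N m)ᶜ ↔ ω' ∈ (blockEv Y N m)ᶜ) := by
      intro ω ω' hagree
      have key : ω ∈ blockEv Y N m ↔ ω' ∈ blockEv Y N m := by
        simp only [blockEv, mem_setOf_eq]
        constructor
        · intro h i h1 h2
          rw [← hagree i (Finset.mem_Ico.mpr ⟨h1, h2⟩)]; exact h i h1 h2
        · intro h i h1 h2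
          rw [hagree i (Finset.mem_Ico.mpr ⟨h1, h2⟩)]; exact h i h1 h2
      simp only [mem_compl_iff]
      exact not_congr key
    have hBdet : ∀ ω ω' : Ω, (∀ i ∈ Finset.range (m * N), Y i ω = Y i ω') →
        (ω ∈ (⋂ j ∈ Finset.range m, (blockEv Y N j)ᶜ) ↔
         ω' ∈ (⋂ j ∈ Finset.range m, (blockEv Y N j)ᶜ)) := by
      intro ω ω' hagree
      have key : ∀ j < m, (ω ∈ blockEv Y N j ↔ ω' ∈ blockEv Y N j) := by
        intro j hj
        simp only [blockEv, mem_setOf_eq]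
        have hag : ∀ i, j * N ≤ i → i < (j + 1) * N → Y i ω = Y i ω' := by
          intro i h1 h2
          exact hagree i (Finset.mem_range.mpr
            (lt_of_lt_of_le h2 (Nat.mul_le_mul_right N (by omega))))
        constructor
        · intro h i h1 h2; rw [← hag i h1 h2]; exact h i h1 h2
        · intro h i h1 h2; rw [hag i h1 h2]; exact h i h1 h2
      simp only [mem_iInter, Finset.mem_range, mem_compl_iff]
      exact forall₂_congr fun j hj => not_congr (key j hj)
    have hprod := meas_inter_eq_mul (μ := μ) hY hindep
      (Finset.Ico (m * N) ((m + 1) * N)) (Finset.range (m * N))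
      (by
        rw [Finset.disjoint_left]
        intro i hi hi'
        rw [Finset.mem_Ico] at hi
        rw [Finset.mem_range] at hi'
        omega)
      ((blockEv Y N m)ᶜ) (⋂ j ∈ Finset.range m, (blockEv Y N j)ᶜ) hAdet hBdet
    rw [hprod]
    have hAc : μ ((blockEv Y N m)ᶜ) = 1 - (6 : ENNReal)⁻¹ ^ N := by
      rw [prob_compl_eq_one_sub (measurableSet_blockEv hY N m), meas_blockEv hindep hdist]
    rw [hAc, pow_succ, mul_comm ((1 - (6 : ENNReal)⁻¹ ^ N) ^ m)]
    exact mul_le_mul_right ih _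

lemma meas_stays_le (hY : ∀ n, Measurable (Y n))
    (hindep : iIndepFun Y μ)
    (hdist : ∀ n, ∀ e : ℤ × ℤ,
      μ {ω | Y n ω = e} = if e ∈ stepSet then (6 : ENNReal)⁻¹ else 0)
    {N : ℕ} (hN1 : 1 ≤ N) {y : ℤ × ℤ} (hy : inDomain N y) (k : ℕ) :
    μ {ω | stays N y Y k ω} ≤ (1 - (6 : ENNReal)⁻¹ ^ N) ^ (k / N) := by
  refine le_trans (measure_mono ?_) (meas_iInter_blockCompl hY hindep hdist N (k / N))
  intro ω hω
  simp only [mem_iInter, Finset.mem_range, mem_compl_iff]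
  intro j hj hA
  have hjk : (j + 1) * N ≤ k := (Nat.le_div_iff_mul_le (by omega)).mp (by omega)
  exact escape hN1 hy hjk hω hA

lemma meas_goodSet_compl (hY : ∀ n, Measurable (Y n))
    (hindep : iIndepFun Y μ)
    (hdist : ∀ n, ∀ e : ℤ × ℤ,
      μ {ω | Y n ω = e} = if e ∈ stepSet then (6 : ENNReal)⁻¹ else 0)
    {N : ℕ} (hN1 : 1 ≤ N) {y : ℤ × ℤ} (hy : inDomain N y) :
    μ (goodSet N y Y)ᶜ = 0 := by
  have hbound : ∀ m : ℕ, μ (goodSet N y Y)ᶜ ≤ (1 - (6 : ENNReal)⁻¹ ^ N) ^ m := by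
    intro m
    have h := meas_stays_le hY hindep hdist hN1 hy (m * N) (μ := μ)
    rw [Nat.mul_div_cancel m (by omega : 0 < N)] at h
    refine le_trans (measure_mono ?_) h
    intro ω hω
    simp only [mem_compl_iff, goodSet, mem_setOf_eq, not_exists, not_and, not_not] at hω
    intro l h1 _
    exact hω l h1
  have hlt : (1 - (6 : ENNReal)⁻¹ ^ N) < 1 :=
    ENNReal.sub_lt_self ENNReal.one_ne_top one_ne_zero
      (pow_ne_zero N (ENNReal.inv_ne_zero.mpr (by norm_num)))
  have htend := ENNReal.tendsto_pow_atTop_nhds_zero_of_lt_one hlt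
  have := ge_of_tendsto' htend hbound
  exact le_antisymm this zero_le

lemma meas_goodSet (hY : ∀ n, Measurable (Y n))
    (hindep : iIndepFun Y μ)
    (hdist : ∀ n, ∀ e : ℤ × ℤ,
      μ {ω | Y n ω = e} = if e ∈ stepSet then (6 : ENNReal)⁻¹ else 0)
    {N : ℕ} (hN1 : 1 ≤ N) {y : ℤ × ℤ} (hy : inDomain N y) :
    μ (goodSet N y Y) = 1 := by
  have h := meas_goodSet_compl hY hindep hdist hN1 hy (μ := μ)
  have := prob_compl_eq_one_sub (μ := μ) (measurableSet_goodSet N y hY)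
  rw [h] at this
  have h1 : μ (goodSet N y Y) ≤ 1 := prob_le_one
  exact le_antisymm h1 (tsub_eq_zero_iff_le.mp this.symm)

lemma tsum_pow_div_ne_top {r : ENNReal} (hr : r < 1) {N : ℕ} (hN : 1 ≤ N) :
    (∑' k : ℕ, r ^ (k / N)) ≠ ⊤ := by
  haveI : NeZero N := ⟨by omega⟩
  rw [← Equiv.tsum_eq (Nat.divModEquiv N).symm (fun k => r ^ (k / N))]
  have hval : ∀ p : ℕ × Fin N, (((Nat.divModEquiv N).symm p : ℕ) / N) = p.1 := by
    intro p
    show (p.1 * N + (p.2 : ℕ)) / N = p.1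
    rw [Nat.add_comm, Nat.add_mul_div_right _ _ (by omega : 0 < N),
      Nat.div_eq_of_lt p.2.is_lt, Nat.zero_add]
  calc (∑' p : ℕ × Fin N, r ^ (((Nat.divModEquiv N).symm p : ℕ) / N))
      = ∑' p : ℕ × Fin N, r ^ p.1 := by
        congr 1; funext p; rw [hval p]
    _ = ∑' (j : ℕ) (_i : Fin N), r ^ j := ENNReal.tsum_prod (f := fun j _ => r ^ j)
    _ = ∑' j : ℕ, (N : ENNReal) * r ^ j := by
        congr 1; funext j
        rw [tsum_fintype, Finset.sum_const, Finset.card_univ, Fintype.card_fin, nsmul_eq_mul]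
    _ = (N : ENNReal) * (1 - r)⁻¹ := by rw [ENNReal.tsum_mul_left, ENNReal.tsum_geometric]
    _ ≠ ⊤ := by
        apply ENNReal.mul_ne_top (ENNReal.natCast_ne_top N)
        rw [Ne, ENNReal.inv_eq_top, tsub_eq_zero_iff_le]
        exact fun h => absurd (lt_of_lt_of_le hr h) (lt_irrefl r)

end Aux
namespace Aux

set_option linter.unusedSectionVars false
set_option maxHeartbeats 1000000

open MeasureTheory

variable {Ω : Type*} [MeasurableSpace Ω] {μ : MeasureTheory.Measure Ω}
  [MeasureTheory.IsProbabilityMeasure μ] {Y : ℕ → Ω → ℤ × ℤ}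

/-- The domain as a finset. -/
noncomputable def Dfin (N : ℕ) : Finset (ℤ × ℤ) :=
  (Finset.Icc (1 : ℤ) N ×ˢ Finset.Icc (1 : ℤ) N).filter (fun z => inDomain N z)

lemma mem_Dfin {N : ℕ} {z : ℤ × ℤ} : z ∈ Dfin N ↔ inDomain N z := by
  simp only [Dfin, Finset.mem_filter, Finset.mem_product, Finset.mem_Icc]
  constructor
  · exact fun h => h.2
  · rintro ⟨h1, h2, h3⟩
    exact ⟨⟨⟨h1, by omega⟩, ⟨h2, by omega⟩⟩, ⟨h1, h2, h3⟩⟩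

lemma card_stepSet_nat : stepSet.card = 6 := by decide

lemma card_stepSet : (stepSet.card : ℝ) = 6 := by rw [card_stepSet_nat]; norm_num

lemma meas_stepIn (hdist : ∀ n, ∀ e : ℤ × ℤ,
      μ {ω | Y n ω = e} = if e ∈ stepSet then (6 : ENNReal)⁻¹ else 0)
    (hY : ∀ n, Measurable (Y n)) (n : ℕ) :
    μ {ω | Y n ω ∈ stepSet}ᶜ = 0 := by
  have hms : MeasurableSet {ω | Y n ω ∈ stepSet} :=
    hY n ((stepSet : Set (ℤ × ℤ)).to_countable.measurableSet)
  have hsplit : {ω | Y n ω ∈ stepSet} = ⋃ e ∈ stepSet, {ω | Y n ω = e} := by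
    ext ω
    simp only [mem_setOf_eq, mem_iUnion]
    exact ⟨fun h => ⟨Y n ω, h, rfl⟩, fun ⟨e, he, h2⟩ => h2 ▸ he⟩
  have hd : Set.PairwiseDisjoint (↑stepSet) (fun e => {ω | Y n ω = e}) := by
    intro e he e' he' hne
    simp only [Function.onFun, Set.disjoint_left, mem_setOf_eq]
    intro ω h1 h2
    exact hne (h1 ▸ h2 ▸ rfl)
  have h1 : μ {ω | Y n ω ∈ stepSet} = 1 := by
    rw [hsplit, measure_biUnion_finset hd (fun e _ => hY n (measurableSet_singleton e))]
    rw [Finset.sum_congr rfl (fun e he => by rw [hdist n e, if_pos he])]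
    rw [Finset.sum_const, card_stepSet_nat, nsmul_eq_mul]
    norm_num
    exact ENNReal.mul_inv_cancel (by norm_num) (by norm_num)
  rw [prob_compl_eq_one_sub hms, h1, tsub_self]

lemma walk_eq_of_agree {y : ℤ × ℤ} {n : ℕ} {ω ω' : Ω}
    (h : ∀ i ∈ Finset.range n, Y i ω = Y i ω') {m : ℕ} (hm : m ≤ n) :
    walk y Y m ω = walk y Y m ω' := by
  unfold walk
  congr 1
  exact Finset.sum_congr rfl fun i hi =>
    h i (Finset.mem_range.mpr (lt_of_lt_of_le (Finset.mem_range.mp hi) hm))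

lemma measurable_walk_comp {y : ℤ × ℤ} (hY : ∀ n, Measurable (Y n))
    {τ : Ω → ℕ} (hτ : Measurable τ) :
    Measurable (fun ω => walk y Y (τ ω) ω) := by
  apply measurable_to_countable'
  intro z
  have : (fun ω => walk y Y (τ ω) ω) ⁻¹' {z} =
      ⋃ m : ℕ, (τ ⁻¹' {m} ∩ {ω | walk y Y m ω = z}) := by
    ext ω
    simp only [mem_preimage, mem_singleton_iff, mem_iUnion, mem_inter_iff, mem_setOf_eq]
    exact ⟨fun h => ⟨τ ω, rfl, h⟩, fun ⟨m, h1, h2⟩ => by rw [h1]; exact h2⟩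
  rw [this]
  exact MeasurableSet.iUnion fun m =>
    (hτ (measurableSet_singleton m)).inter (measurableSet_walk_eq y hY m z)

/-- The "pre-exit" event: the walk is at `z` at time `n` and has stayed in the domain. -/
def preEv (N : ℕ) (y : ℤ × ℤ) (Y : ℕ → Ω → ℤ × ℤ) (n : ℕ) (z : ℤ × ℤ) : Set Ω :=
  {ω | walk y Y n ω = z ∧ stays N y Y n ω}

lemma measurableSet_preEv (N : ℕ) (y : ℤ × ℤ) (hY : ∀ n, Measurable (Y n))
    (n : ℕ) (z : ℤ × ℤ) : MeasurableSet (preEv N y Y n z) :=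
  (measurableSet_walk_eq y hY n z).inter (measurableSet_stays N y hY n)

lemma meas_green_set_eq (hY : ∀ n, Measurable (Y n))
    (hindep : iIndepFun Y μ)
    (hdist : ∀ n, ∀ e : ℤ × ℤ,
      μ {ω | Y n ω = e} = if e ∈ stepSet then (6 : ENNReal)⁻¹ else 0)
    {N : ℕ} (hN1 : 1 ≤ N) {y : ℤ × ℤ} (hy : inDomain N y) (n : ℕ) (z : ℤ × ℤ) :
    μ {ω | walk y Y n ω = z ∧ n < exitTime N y Y ω} = μ (preEv N y Y n z) := by
  have hset : {ω | walk y Y n ω = z ∧ n < exitTime N y Y ω} =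
      preEv N y Y n z ∩ goodSet N y Y := by
    ext ω
    simp only [mem_setOf_eq, preEv, mem_inter_iff, lt_exitTime_iff]
    tauto
  rw [hset, measure_inter_conull (meas_goodSet_compl hY hindep hdist hN1 hy)]

lemma meas_preEv_inter_step (hY : ∀ n, Measurable (Y n))
    (hindep : iIndepFun Y μ)
    (N : ℕ) (y : ℤ × ℤ) (n : ℕ) (z : ℤ × ℤ) (e : ℤ × ℤ) :
    μ (preEv N y Y n z ∩ {ω | Y n ω = e}) = μ (preEv N y Y n z) * μ {ω | Y n ω = e} := by
  refine meas_inter_eq_mul hY hindep (Finset.range n) {n} ?_ _ _ ?_ ?_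
  · simp only [Finset.disjoint_left, Finset.mem_range, Finset.mem_singleton]
    omega
  · intro ω ω' hagree
    simp only [preEv, mem_setOf_eq]
    have hw : ∀ m ≤ n, walk y Y m ω = walk y Y m ω' := fun m hm =>
      walk_eq_of_agree hagree hm
    constructor
    · rintro ⟨h1, h2⟩
      exact ⟨(hw n le_rfl) ▸ h1, fun m hm1 hm2 => (hw m hm2) ▸ h2 m hm1 hm2⟩
    · rintro ⟨h1, h2⟩
      exact ⟨(hw n le_rfl).symm ▸ h1, fun m hm1 hm2 => (hw m hm2).symm ▸ h2 m hm1 hm2⟩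
  · intro ω ω' hagree
    have := hagree n (Finset.mem_singleton_self n)
    simp only [mem_setOf_eq, this]

lemma tsum_green_ne_top (hY : ∀ n, Measurable (Y n))
    (hindep : iIndepFun Y μ)
    (hdist : ∀ n, ∀ e : ℤ × ℤ,
      μ {ω | Y n ω = e} = if e ∈ stepSet then (6 : ENNReal)⁻¹ else 0)
    {N : ℕ} (hN1 : 1 ≤ N) {y : ℤ × ℤ} (hy : inDomain N y) (z : ℤ × ℤ) :
    (∑' n : ℕ, μ {ω | walk y Y n ω = z ∧ n < exitTime N y Y ω}) ≠ ⊤ := by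
  have hle : ∀ n : ℕ, μ {ω | walk y Y n ω = z ∧ n < exitTime N y Y ω} ≤
      (1 - (6 : ENNReal)⁻¹ ^ N) ^ (n / N) := by
    intro n
    refine le_trans (measure_mono ?_) (meas_stays_le hY hindep hdist hN1 hy n)
    intro ω hω
    exact (lt_exitTime_iff.mp hω.2).2
  have hlt : (1 - (6 : ENNReal)⁻¹ ^ N) < 1 :=
    ENNReal.sub_lt_self ENNReal.one_ne_top one_ne_zero
      (pow_ne_zero N (ENNReal.inv_ne_zero.mpr (by norm_num)))
  exact ne_top_of_le_ne_top (tsum_pow_div_ne_top hlt hN1) (ENNReal.tsum_le_tsum hle)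

end Aux
namespace Aux

set_option linter.unusedSectionVars false
set_option maxHeartbeats 1000000

open MeasureTheory

variable {Ω : Type*} [MeasurableSpace Ω] {μ : MeasureTheory.Measure Ω}
  [MeasureTheory.IsProbabilityMeasure μ] {Y : ℕ → Ω → ℤ × ℤ}

/-- A finite set containing all possible positions of the stopped walk. -/
noncomputable def Fset (N : ℕ) (y : ℤ × ℤ) : Finset (ℤ × ℤ) :=
  insert y (Dfin N) ∪
    ((insert y (Dfin N)) ×ˢ stepSet).image (fun p => p.1 + p.2)

lemma walk_min_mem_Fset {N : ℕ} {y : ℤ × ℤ} (hy : inDomain N y) {ω : Ω}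
    (hgood : ω ∈ goodSet N y Y) (hsteps : ∀ m, Y m ω ∈ stepSet) (n : ℕ) :
    walk y Y (min n (exitTime N y Y ω)) ω ∈ Fset N y := by
  have hstayIns : ∀ l, l < exitTime N y Y ω → walk y Y l ω ∈ insert y (Dfin N) := by
    intro l hl
    rcases Nat.eq_zero_or_pos l with h0 | h1
    · rw [h0, walk_zero]; exact Finset.mem_insert_self y _
    · exact Finset.mem_insert_of_mem (mem_Dfin.mpr ((lt_exitTime_iff.mp hl).2 l h1 le_rfl))
  have hm : min n (exitTime N y Y ω) ≤ exitTime N y Y ω := min_le_right _ _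
  rcases lt_or_eq_of_le hm with hlt | heq
  · exact Finset.mem_union_left _ (hstayIns _ hlt)
  · have hσ1 : 1 ≤ exitTime N y Y ω := exitTime_pos_iff.mpr hgood
    have hsplit : exitTime N y Y ω = (exitTime N y Y ω - 1) + 1 := by omega
    refine Finset.mem_union_right _ (Finset.mem_image.mpr
      ⟨(walk y Y (exitTime N y Y ω - 1) ω, Y (exitTime N y Y ω - 1) ω), ?_, ?_⟩)
    · exact Finset.mem_product.mpr ⟨hstayIns _ (by omega), hsteps _⟩
    · show walk y Y (exitTime N y Y ω - 1) ω + Y (exitTime N y Y ω - 1) ω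
        = walk y Y (min n (exitTime N y Y ω)) ω
      rw [heq, ← walk_succ]
      congr 1
      omega

lemma ae_gset (hY : ∀ n, Measurable (Y n))
    (hindep : iIndepFun Y μ)
    (hdist : ∀ n, ∀ e : ℤ × ℤ,
      μ {ω | Y n ω = e} = if e ∈ stepSet then (6 : ENNReal)⁻¹ else 0)
    {N : ℕ} (hN1 : 1 ≤ N) {y : ℤ × ℤ} (hy : inDomain N y) :
    ∀ᵐ ω ∂μ, ω ∈ goodSet N y Y ∧ ∀ m, Y m ω ∈ stepSet := by
  have hnull : μ ((goodSet N y Y)ᶜ ∪ ⋃ m, {ω | Y m ω ∈ stepSet}ᶜ) = 0 :=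
    measure_union_null (meas_goodSet_compl hY hindep hdist hN1 hy)
      (measure_iUnion_null fun m => meas_stepIn hdist hY m)
  rw [ae_iff]
  refine measure_mono_null ?_ hnull
  intro ω hω
  simp only [mem_setOf_eq, not_and, not_forall] at hω
  simp only [mem_union, mem_compl_iff, mem_iUnion, mem_setOf_eq]
  by_cases hg : ω ∈ goodSet N y Y
  · obtain ⟨m, hm⟩ := hω hg
    exact Or.inr ⟨m, hm⟩
  · exact Or.inl hg

lemma measurable_vwalk_min {y : ℤ × ℤ} (hY : ∀ n, Measurable (Y n)) (N : ℕ)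
    (v : ℝ × ℝ → ℝ) (n : ℕ) :
    Measurable (fun ω => vLattice v (walk y Y (min n (exitTime N y Y ω)) ω)) := by
  have hτ : Measurable (fun ω => min n (exitTime N y Y ω)) :=
    (measurable_of_countable (fun k => min n k)).comp (measurable_exitTime N y hY)
  exact (measurable_of_countable (vLattice v)).comp (measurable_walk_comp hY hτ)

lemma measurable_vwalk_exit {y : ℤ × ℤ} (hY : ∀ n, Measurable (Y n)) (N : ℕ)
    (v : ℝ × ℝ → ℝ) :
    Measurable (fun ω => vLattice v (walk y Y (exitTime N y Y ω) ω)) :=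
  (measurable_of_countable (vLattice v)).comp
    (measurable_walk_comp hY (measurable_exitTime N y hY))

lemma abs_vLattice_le {N : ℕ} {y z : ℤ × ℤ} (v : ℝ × ℝ → ℝ) (hz : z ∈ Fset N y) :
    |vLattice v z| ≤ ∑ w ∈ Fset N y, |vLattice v w| :=
  Finset.single_le_sum (f := fun w => |vLattice v w|) (fun _ _ => abs_nonneg _) hz

lemma integrable_vwalk_min (hY : ∀ n, Measurable (Y n))
    (hindep : iIndepFun Y μ)
    (hdist : ∀ n, ∀ e : ℤ × ℤ,
      μ {ω | Y n ω = e} = if e ∈ stepSet then (6 : ENNReal)⁻¹ else 0)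
    {N : ℕ} (hN1 : 1 ≤ N) {y : ℤ × ℤ} (hy : inDomain N y) (v : ℝ × ℝ → ℝ) (n : ℕ) :
    Integrable (fun ω => vLattice v (walk y Y (min n (exitTime N y Y ω)) ω)) μ := by
  refine Integrable.mono' (integrable_const (∑ w ∈ Fset N y, |vLattice v w|))
    (measurable_vwalk_min hY N v n).aestronglyMeasurable ?_
  filter_upwards [ae_gset hY hindep hdist hN1 hy] with ω hω
  rw [Real.norm_eq_abs]
  exact abs_vLattice_le v (walk_min_mem_Fset hy hω.1 hω.2 n)

lemma step_integral (hY : ∀ n, Measurable (Y n))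
    (hindep : iIndepFun Y μ)
    (hdist : ∀ n, ∀ e : ℤ × ℤ,
      μ {ω | Y n ω = e} = if e ∈ stepSet then (6 : ENNReal)⁻¹ else 0)
    {N : ℕ} (hN1 : 1 ≤ N) {y : ℤ × ℤ} (hy : inDomain N y) (v : ℝ × ℝ → ℝ) (n : ℕ) :
    ∫ ω, vLattice v (walk y Y (min (n + 1) (exitTime N y Y ω)) ω) ∂μ
      = (∫ ω, vLattice v (walk y Y (min n (exitTime N y Y ω)) ω) ∂μ)
        + ∑ z ∈ Dfin N, (μ (preEv N y Y n z)).toReal * fErr v z := by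
  have key : ∀ ω, ω ∈ goodSet N y Y → (∀ m, Y m ω ∈ stepSet) →
      vLattice v (walk y Y (min (n + 1) (exitTime N y Y ω)) ω)
        - vLattice v (walk y Y (min n (exitTime N y Y ω)) ω)
      = ∑ z ∈ Dfin N, ∑ e ∈ stepSet,
          Set.indicator (preEv N y Y n z ∩ {ω' | Y n ω' = e})
            (fun _ => vLattice v (z + e) - vLattice v z) ω := by
    intro ω hgood hsteps
    by_cases hlt : n < exitTime N y Y ω
    · have hst := (lt_exitTime_iff.mp hlt).2
      have hmin1 : min (n + 1) (exitTime N y Y ω) = n + 1 := Nat.min_eq_left (by omega)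
      have hmin0 : min n (exitTime N y Y ω) = n := Nat.min_eq_left (by omega)
      rw [hmin1, hmin0, walk_succ]
      have hz₀D : walk y Y n ω ∈ Dfin N := by
        refine mem_Dfin.mpr ?_
        rcases Nat.eq_zero_or_pos n with h0 | h1
        · rw [h0, walk_zero]; exact hy
        · exact hst n h1 le_rfl
      rw [Finset.sum_eq_single (walk y Y n ω)]
      · rw [Finset.sum_eq_single (Y n ω)]
        · have hmem : ω ∈ preEv N y Y n (walk y Y n ω) ∩ {ω' | Y n ω' = Y n ω} :=
            ⟨⟨rfl, hst⟩, rfl⟩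
          rw [Set.indicator_of_mem hmem]
        · intro e _ hne
          refine Set.indicator_of_notMem ?_ _
          rintro ⟨-, h2⟩
          exact hne h2.symm
        · intro hYn
          exact absurd (hsteps n) hYn
      · intro z _ hne
        refine Finset.sum_eq_zero fun e _ => ?_
        refine Set.indicator_of_notMem ?_ _
        rintro ⟨⟨hw, -⟩, -⟩
        exact hne hw.symm
      · intro hz
        exact absurd hz₀D hz
    · push_neg at hlt
      have hmin1 : min (n + 1) (exitTime N y Y ω) = exitTime N y Y ω :=
        Nat.min_eq_right (by omega)
      have hmin0 : min n (exitTime N y Y ω) = exitTime N y Y ω := Nat.min_eq_right hlt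
      rw [hmin1, hmin0, sub_self]
      symm
      refine Finset.sum_eq_zero fun z _ => Finset.sum_eq_zero fun e _ => ?_
      refine Set.indicator_of_notMem ?_ _
      rintro ⟨⟨h1, h2⟩, h3⟩
      obtain ⟨hσ1, hσD⟩ := exit_not_inDomain hgood
      exact hσD (h2 _ hσ1 hlt)
  have hint1 := integrable_vwalk_min hY hindep hdist hN1 hy v (n + 1) (μ := μ)
  have hint0 := integrable_vwalk_min hY hindep hdist hN1 hy v n (μ := μ)
  have hsub : ∫ ω, (vLattice v (walk y Y (min (n + 1) (exitTime N y Y ω)) ω)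
      - vLattice v (walk y Y (min n (exitTime N y Y ω)) ω)) ∂μ
      = (∫ ω, vLattice v (walk y Y (min (n + 1) (exitTime N y Y ω)) ω) ∂μ)
        - ∫ ω, vLattice v (walk y Y (min n (exitTime N y Y ω)) ω) ∂μ :=
    integral_sub hint1 hint0
  have hcongr : ∫ ω, (vLattice v (walk y Y (min (n + 1) (exitTime N y Y ω)) ω)
      - vLattice v (walk y Y (min n (exitTime N y Y ω)) ω)) ∂μ
      = ∫ ω, (∑ z ∈ Dfin N, ∑ e ∈ stepSet,
          Set.indicator (preEv N y Y n z ∩ {ω' | Y n ω' = e})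
            (fun _ => vLattice v (z + e) - vLattice v z) ω) ∂μ := by
    refine integral_congr_ae ?_
    filter_upwards [ae_gset hY hindep hdist hN1 hy] with ω hω
    exact key ω hω.1 hω.2
  have hmeas_ie : ∀ (z e : ℤ × ℤ),
      MeasurableSet (preEv N y Y n z ∩ {ω' | Y n ω' = e}) := fun z e =>
    (measurableSet_preEv N y hY n z).inter (hY n (measurableSet_singleton e))
  have hsum : ∫ ω, (∑ z ∈ Dfin N, ∑ e ∈ stepSet,
        Set.indicator (preEv N y Y n z ∩ {ω' | Y n ω' = e})
          (fun _ => vLattice v (z + e) - vLattice v z) ω) ∂μ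
      = ∑ z ∈ Dfin N, ∑ e ∈ stepSet,
          (μ (preEv N y Y n z ∩ {ω' | Y n ω' = e})).toReal
            * (vLattice v (z + e) - vLattice v z) := by
    rw [integral_finset_sum _ (fun z _ => integrable_finset_sum _ (fun e _ =>
      (integrable_const _).indicator (hmeas_ie z e)))]
    refine Finset.sum_congr rfl fun z _ => ?_
    rw [integral_finset_sum _ (fun e _ => (integrable_const _).indicator (hmeas_ie z e))]
    refine Finset.sum_congr rfl fun e _ => ?_
    rw [integral_indicator_const _ (hmeas_ie z e), smul_eq_mul]; rfl
  have hfinal : ∀ z ∈ Dfin N, ∑ e ∈ stepSet,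
      (μ (preEv N y Y n z ∩ {ω' | Y n ω' = e})).toReal
        * (vLattice v (z + e) - vLattice v z)
      = (μ (preEv N y Y n z)).toReal * fErr v z := by
    intro z _
    have hprod : ∀ e ∈ stepSet, (μ (preEv N y Y n z ∩ {ω' | Y n ω' = e})).toReal
        = (μ (preEv N y Y n z)).toReal * (6 : ℝ)⁻¹ := by
      intro e he
      rw [meas_preEv_inter_step hY hindep, hdist n e, if_pos he, ENNReal.toReal_mul]
      congr 1
      rw [ENNReal.toReal_inv]
      norm_num
    rw [Finset.sum_congr rfl (fun e he => by rw [hprod e he])]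
    have hexp : ∑ e ∈ stepSet, (μ (preEv N y Y n z)).toReal * (6 : ℝ)⁻¹
        * (vLattice v (z + e) - vLattice v z)
        = (μ (preEv N y Y n z)).toReal * (6 : ℝ)⁻¹
          * ((∑ e ∈ stepSet, vLattice v (z + e)) - 6 * vLattice v z) := by
      rw [← Finset.mul_sum, Finset.sum_sub_distrib, Finset.sum_const, card_stepSet_nat,
        nsmul_eq_mul]
      norm_num
    rw [hexp]
    unfold fErr
    ring
  rw [hcongr, hsum] at hsub
  rw [Finset.sum_congr rfl hfinal] at hsub
  linarith

lemma integral_vwalk_min_eq (hY : ∀ n, Measurable (Y n))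
    (hindep : iIndepFun Y μ)
    (hdist : ∀ n, ∀ e : ℤ × ℤ,
      μ {ω | Y n ω = e} = if e ∈ stepSet then (6 : ENNReal)⁻¹ else 0)
    {N : ℕ} (hN1 : 1 ≤ N) {y : ℤ × ℤ} (hy : inDomain N y) (v : ℝ × ℝ → ℝ) (n : ℕ) :
    ∫ ω, vLattice v (walk y Y (min n (exitTime N y Y ω)) ω) ∂μ
      = vLattice v y + ∑ k ∈ Finset.range n, ∑ z ∈ Dfin N,
          (μ (preEv N y Y k z)).toReal * fErr v z := by
  induction n with
  | zero =>
    have h0 : ∀ ω : Ω, vLattice v (walk y Y (min 0 (exitTime N y Y ω)) ω) = vLattice v y := by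
      intro ω
      rw [Nat.zero_min, walk_zero]
    rw [integral_congr_ae (Filter.Eventually.of_forall h0), integral_const]
    simp
  | succ n ih =>
    rw [step_integral hY hindep hdist hN1 hy v n, ih, Finset.sum_range_succ, add_assoc]

end Aux

open Aux

theorem expectation_at_exit_via_green_function
    {Ω : Type*} [MeasurableSpace Ω] (μ : Measure Ω) [IsProbabilityMeasure μ]
    (Y : ℕ → Ω → ℤ × ℤ) (hmeas : ∀ n, Measurable (Y n))
    (hindep : iIndepFun Y μ)
    (hdist : ∀ n, ∀ e : ℤ × ℤ,
      μ {ω | Y n ω = e} = if e ∈ stepSet then (6 : ENNReal)⁻¹ else 0)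
    (y₁ y₂ : ℤ) (hy₁ : 1 ≤ y₁) (hy₂ : 1 ≤ y₂)
    (N : ℕ) (hN : y₁ + y₂ < (N : ℤ))
    (v : (ℝ × ℝ) → ℝ)
    (hv : IsAdmissible N (fun p => (N : ℝ) - Real.sqrt (2 / 3) * p.2) v) :
    μ {ω | ∃ n : ℕ, 1 ≤ n ∧ ¬ inDomain N (walk (y₁, y₂) Y n ω)} = 1 ∧
    Summable (fun z : {z : ℤ × ℤ // inDomain N z} =>
      green μ N (y₁, y₂) Y z.val * |fErr v z.val|) ∧
    ∫ ω, vLattice v (walk (y₁, y₂) Y (exitTime N (y₁, y₂) Y ω) ω) ∂μ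
      = vLattice v (y₁, y₂) +
        ∑' z : {z : ℤ × ℤ // inDomain N z},
          green μ N (y₁, y₂) Y z.val * fErr v z.val := by
  have hy : inDomain N ((y₁, y₂) : ℤ × ℤ) := ⟨hy₁, hy₂, by omega⟩
  have hN1 : 1 ≤ N := by omega
  haveI : Fintype {z : ℤ × ℤ // inDomain N z} := Fintype.subtype (Dfin N) (fun z => mem_Dfin)
  refine ⟨meas_goodSet hmeas hindep hdist hN1 hy, Summable.of_finite, ?_⟩
  -- the Green function as a tsum over preEv measures
  have hptsum : ∀ z : ℤ × ℤ, (∑' k : ℕ, μ (preEv N (y₁, y₂) Y k z)) ≠ ⊤ := by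
    intro z
    have h := tsum_green_ne_top hmeas hindep hdist hN1 hy z (μ := μ)
    rwa [tsum_congr (fun k => meas_green_set_eq hmeas hindep hdist hN1 hy k z)] at h
  have hgreen : ∀ z : ℤ × ℤ, green μ N (y₁, y₂) Y z
      = (∑' k : ℕ, μ (preEv N (y₁, y₂) Y k z)).toReal := by
    intro z
    unfold green
    congr 1
    exact tsum_congr (fun k => meas_green_set_eq hmeas hindep hdist hN1 hy k z)
  -- LHS limit
  have hlimL : Tendsto
      (fun n => ∫ ω, vLattice v (walk (y₁, y₂) Y (min n (exitTime N (y₁, y₂) Y ω)) ω) ∂μ)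
      atTop
      (nhds (∫ ω, vLattice v (walk (y₁, y₂) Y (exitTime N (y₁, y₂) Y ω) ω) ∂μ)) := by
    refine tendsto_integral_of_dominated_convergence
      (fun _ => ∑ w ∈ Fset N (y₁, y₂), |vLattice v w|)
      (fun n => (measurable_vwalk_min hmeas N v n).aestronglyMeasurable)
      (integrable_const _) ?_ ?_
    · intro n
      filter_upwards [ae_gset hmeas hindep hdist hN1 hy] with ω hω
      rw [Real.norm_eq_abs]
      exact abs_vLattice_le v (walk_min_mem_Fset hy hω.1 hω.2 n)
    · filter_upwards [ae_gset hmeas hindep hdist hN1 hy] with ω hω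
      apply tendsto_atTop_of_eventually_const (i₀ := exitTime N (y₁, y₂) Y ω)
      intro n hn
      rw [Nat.min_eq_right hn]
  -- rewrite the prelimit using the telescoping identity
  have hfun : (fun n => ∫ ω,
        vLattice v (walk (y₁, y₂) Y (min n (exitTime N (y₁, y₂) Y ω)) ω) ∂μ)
      = (fun n => vLattice v (y₁, y₂) + ∑ k ∈ Finset.range n, ∑ z ∈ Dfin N,
          (μ (preEv N (y₁, y₂) Y k z)).toReal * fErr v z) :=
    funext fun n => integral_vwalk_min_eq hmeas hindep hdist hN1 hy v n
  rw [hfun] at hlimL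
  -- RHS limit
  have hlimR : Tendsto
      (fun n => vLattice v (y₁, y₂) + ∑ k ∈ Finset.range n, ∑ z ∈ Dfin N,
          (μ (preEv N (y₁, y₂) Y k z)).toReal * fErr v z)
      atTop
      (nhds (vLattice v (y₁, y₂) + ∑ z ∈ Dfin N,
          (∑' k : ℕ, μ (preEv N (y₁, y₂) Y k z)).toReal * fErr v z)) := by
    refine Tendsto.const_add _ ?_
    have hswap : (fun n => ∑ k ∈ Finset.range n, ∑ z ∈ Dfin N,
          (μ (preEv N (y₁, y₂) Y k z)).toReal * fErr v z)
        = fun n => ∑ z ∈ Dfin N, ∑ k ∈ Finset.range n,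
          (μ (preEv N (y₁, y₂) Y k z)).toReal * fErr v z :=
      funext fun n => Finset.sum_comm
    rw [hswap]
    refine tendsto_finset_sum _ (fun z _ => ?_)
    have h1 : (fun n => ∑ k ∈ Finset.range n,
          (μ (preEv N (y₁, y₂) Y k z)).toReal * fErr v z)
        = fun n => (∑ k ∈ Finset.range n, μ (preEv N (y₁, y₂) Y k z)).toReal * fErr v z := by
      funext n
      rw [ENNReal.toReal_sum (fun k _ => measure_ne_top μ _), Finset.sum_mul]
    rw [h1]
    exact (((ENNReal.tendsto_toReal (hptsum z)).comp
      (ENNReal.tendsto_nat_tsum _))).mul_const _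
  have heq := tendsto_nhds_unique hlimL hlimR
  have hsubty : (∑' z : {z : ℤ × ℤ // inDomain N z},
        green μ N (y₁, y₂) Y z.val * fErr v z.val)
      = ∑ z ∈ Dfin N, green μ N (y₁, y₂) Y z * fErr v z := by
    rw [tsum_fintype]
    exact (Finset.sum_subtype (Dfin N) (fun z => mem_Dfin)
      (fun z => green μ N (y₁, y₂) Y z * fErr v z)).symm
  rw [hsubty, Finset.sum_congr rfl (fun z _ => by rw [hgreen z])]
  exact heq
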